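/- Fix 0 < p < 1. For every τ ≥ 0 there is a unique real number κ_p(τ) > τ/p such that the function g(κ) = (κ/2)·Λ*(τ/κ) satisfies: g(κ) < 1 for all κ with τ/p < κ < κ_p(τ), g(κ_p(τ)) = 1, and g(κ) > 1 for all κ > κ_p(τ). -/

import Mathlib

open MeasureTheory Filter
open scoped ENNReal NNReal

/-- The Bernoulli(p) measure on `Bool`. -/
noncomputable def bernoulliBool (p : ℝ) : Measure Bool :=
  p.toNNReal • Measure.dirac true + (1 - p).toNNReal • Measure.dirac false

instance (p : ℝ) : IsFiniteMeasure (bernoulliBool p) := by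
  unfold bernoulliBool; infer_instance

instance (n : ℕ) : MeasurableSpace (SimpleGraph (Fin n)) := ⊤

/-- The Erdős–Rényi random graph `G(n,p)`: the distribution of the simple graph on `Fin n`
obtained by including each possible edge independently with probability `p`. -/
noncomputable def erMeasure (n : ℕ) (p : ℝ) : Measure (SimpleGraph (Fin n)) :=
  Measure.map (fun f : Sym2 (Fin n) → Bool => SimpleGraph.fromEdgeSet {e | f e = true})
    (Measure.pi fun _ : Sym2 (Fin n) => bernoulliBool p)

/-- A set `S` of vertices is `t`-dependent if the induced subgraph has maximum degree at most `t`,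
i.e. every vertex of `S` has at most `t` neighbours inside `S`. -/
def IsTDependent {V : Type*} (G : SimpleGraph V) (t : ℕ) (S : Set V) : Prop :=
  ∀ v ∈ S, {u ∈ S | G.Adj v u}.ncard ≤ t

/-- The `t`-improper chromatic number: the least number of colours in a vertex colouring
in which every colour class is `t`-dependent. -/
noncomputable def improperChromaticNumber {V : Type*} (G : SimpleGraph V) (t : ℕ) : ℕ :=
  sInf {k | ∃ c : V → Fin k, ∀ i : Fin k, IsTDependent G t {v | c v = i}}

/-- The `t`-dependence number: the maximum size of a `t`-dependent set. -/
noncomputable def tDependenceNumber {V : Type*} (G : SimpleGraph V) (t : ℕ) : ℕ :=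
  sSup {m | ∃ S : Set V, S.ncard = m ∧ IsTDependent G t S}

/-- The Fenchel–Legendre transform `Λ*(x) = x ln(x/p) + (1-x) ln((1-x)/(1-p))`
(with the conventions `Λ*(0) = ln(1/(1-p))`, `Λ*(1) = ln(1/p)`, which hold automatically
since `Real.log 0 = 0` in Lean). -/
noncomputable def LambdaStar (p x : ℝ) : ℝ :=
  x * Real.log (x / p) + (1 - x) * Real.log ((1 - x) / (1 - p))

/-- Fix `0 < p < 1`.  For every `τ ≥ 0` there is a unique `κ₀ > τ/p` such
that `g(κ) = (κ/2)·Λ*(τ/κ)` satisfies `g(κ) < 1` for `τ/p < κ < κ₀`, `g(κ₀) = 1`, and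
`g(κ) > 1` for `κ > κ₀`. -/
theorem stmt9 (p : ℝ) (hp0 : 0 < p) (hp1 : p < 1) (τ : ℝ) (hτ : 0 ≤ τ) :
    ∃! κ₀ : ℝ, τ / p < κ₀ ∧
      (∀ κ : ℝ, τ / p < κ → κ < κ₀ → κ / 2 * LambdaStar p (τ / κ) < 1) ∧
      κ₀ / 2 * LambdaStar p (τ / κ₀) = 1 ∧
      (∀ κ : ℝ, κ₀ < κ → 1 < κ / 2 * LambdaStar p (τ / κ)) := by
  have hq0 : (0:ℝ) < 1 - p := by linarith
  set a := τ / p with ha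
  have ha0 : 0 ≤ a := div_nonneg hτ hp0.le
  set h : ℝ → ℝ := fun x => x * Real.log x - x * Real.log p
      + (1 - x) * Real.log (1 - x) - (1 - x) * Real.log (1 - p) with hh
  set G : ℝ → ℝ := fun κ => κ / 2 * h (τ / κ) with hG
  have hκpos : ∀ κ : ℝ, a < κ → 0 < κ := fun κ hκ => lt_of_le_of_lt ha0 hκ
  have hxlt : ∀ κ : ℝ, a < κ → τ / κ < p := by
    intro κ hκ
    have hκ0 := hκpos κ hκ
    rw [div_lt_iff₀ hκ0]
    have h2 : τ < κ * p := by
      have := (div_lt_iff₀ hp0).mp hκ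
      linarith
    linarith
  have hx0 : ∀ κ : ℝ, a < κ → 0 ≤ τ / κ := fun κ hκ => div_nonneg hτ (hκpos κ hκ).le
  have hLh : ∀ x : ℝ, 0 ≤ x → x < 1 → LambdaStar p x = h x := by
    intro x h0 h1
    rcases eq_or_lt_of_le h0 with h0 | h0
    · simp [LambdaStar, hh, ← h0, one_div, Real.log_inv]
    · simp only [LambdaStar, hh]
      rw [Real.log_div h0.ne' hp0.ne',
        Real.log_div (by linarith : (1:ℝ) - x ≠ 0) hq0.ne']
      ring
  have hmul_log : Continuous fun x : ℝ => x * Real.log x := Real.continuous_mul_log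
  have hhcont : Continuous h := by
    rw [hh]
    exact ((hmul_log.sub (continuous_id.mul continuous_const)).add
      (hmul_log.comp (continuous_const.sub continuous_id))).sub
      ((continuous_const.sub continuous_id).mul continuous_const)
  have hGcont : ContinuousOn G (Set.Ici a) := by
    rcases eq_or_lt_of_le hτ with hτ0 | hτ0
    · have hGe : G = fun κ => κ / 2 * h 0 := by
        funext κ; simp [hG, ← hτ0]
      rw [hGe]
      exact ((continuous_id.div_const 2).mul continuous_const).continuousOn
    · have haa : 0 < a := div_pos hτ0 hp0
      rw [hG]
      apply ContinuousOn.mul ((continuous_id.div_const 2).continuousOn)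
      apply hhcont.comp_continuousOn
      exact continuousOn_const.div continuousOn_id
        (fun κ hκ => (lt_of_lt_of_le haa hκ).ne')
  have hd1 : ∀ z : ℝ, z ≠ 0 →
      HasDerivAt (fun y : ℝ => y * Real.log y) (Real.log z + 1) z := by
    intro z hz
    have := (hasDerivAt_id z).mul (Real.hasDerivAt_log hz)
    refine this.congr_deriv ?_
    simp [hz]
  have hderiv : ∀ κ : ℝ, a < κ →
      HasDerivAt G ((Real.log (1 - τ / κ) - Real.log (1 - p)) / 2) κ := by
    intro κ hκ
    have hκ0 : 0 < κ := hκpos κ hκ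
    rcases eq_or_lt_of_le hτ with hτ0 | hτ0
    · have hGe : G = fun κ : ℝ => κ / 2 * h 0 := by
        funext y; simp [hG, ← hτ0]
      rw [hGe]
      have hd : HasDerivAt (fun κ : ℝ => κ / 2 * h 0) (1 / 2 * h 0) κ := by
        simpa using ((hasDerivAt_id κ).div_const 2).mul_const (h 0)
      convert hd using 1
      simp [hh, ← hτ0]
      ring
    · set x := τ / κ with hx
      have hx0' : 0 < x := div_pos hτ0 hκ0
      have hx1 : x < 1 := lt_trans (hxlt κ hκ) hp1
      have h1x : (0:ℝ) < 1 - x := by linarith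
      have hu : HasDerivAt (fun y : ℝ => τ / y) (-(τ / κ ^ 2)) κ := by
        simpa [div_eq_mul_inv, mul_neg] using (hasDerivAt_inv hκ0.ne').const_mul τ
      have hsub : HasDerivAt (fun y : ℝ => 1 - y) (-1 : ℝ) x := by
        simpa using (hasDerivAt_id x).const_sub 1
      have t1 := hd1 x hx0'.ne'
      have t3 : HasDerivAt (fun y : ℝ => (1 - y) * Real.log (1 - y))
          (-(Real.log (1 - x) + 1)) x := by
        have := (hd1 (1 - x) h1x.ne').comp x hsub
        simpa [Function.comp_def, mul_neg] using this
      have t2 : HasDerivAt (fun y : ℝ => y * Real.log p) (Real.log p) x := by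
        simpa using (hasDerivAt_id x).mul_const (Real.log p)
      have t4 : HasDerivAt (fun y : ℝ => (1 - y) * Real.log (1 - p))
          (-Real.log (1 - p)) x := by
        simpa using hsub.mul_const (Real.log (1 - p))
      have hD : HasDerivAt h
          (Real.log x - Real.log p - Real.log (1 - x) + Real.log (1 - p)) x := by
        rw [hh]
        refine (((t1.sub t2).add t3).sub t4).congr_deriv ?_
        ring
      have hcomp : HasDerivAt (fun y : ℝ => h (τ / y))
          ((Real.log x - Real.log p - Real.log (1 - x) + Real.log (1 - p))
            * (-(τ / κ ^ 2))) κ := by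
        have := hD.comp κ hu
        simpa [Function.comp_def] using this
      have hid2 : HasDerivAt (fun y : ℝ => y / 2) (1 / 2 : ℝ) κ := by
        simpa using (hasDerivAt_id κ).div_const 2
      have hmul : HasDerivAt G
          (1 / 2 * h (τ / κ) + κ / 2 *
            ((Real.log x - Real.log p - Real.log (1 - x) + Real.log (1 - p))
              * (-(τ / κ ^ 2)))) κ := by
        rw [hG]
        exact hid2.mul hcomp
      convert hmul using 1
      simp only [hh, hx]
      field_simp
      ring
  have hmono : StrictMonoOn G (Set.Ici a) := by
    apply strictMonoOn_of_deriv_pos (convex_Ici a) hGcont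
    intro κ hκ
    rw [interior_Ici] at hκ
    rw [(hderiv κ hκ).deriv]
    have hlt : Real.log (1 - p) < Real.log (1 - τ / κ) :=
      Real.log_lt_log hq0 (by have := hxlt κ hκ; linarith)
    linarith
  have hGa : G a = 0 := by
    rcases eq_or_lt_of_le hτ with hτ0 | hτ0
    · simp [hG, ha, ← hτ0]
    · have hτa : τ / a = p := by
        rw [ha]; field_simp
      simp only [hG, hh, hτa]
      ring
  have htop : Tendsto G atTop atTop := by
    rw [hG]
    have h1 : Tendsto (fun κ : ℝ => τ / κ) atTop (nhds 0) :=
      tendsto_const_nhds.div_atTop tendsto_id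
    have h2 : Tendsto (fun κ : ℝ => h (τ / κ)) atTop (nhds (h 0)) :=
      (hhcont.tendsto 0).comp h1
    have h3 : (0:ℝ) < h 0 := by
      have hlog : Real.log (1 - p) < 0 := Real.log_neg hq0 (by linarith)
      simp only [hh]
      simp
      linarith
    have h4 : Tendsto (fun κ : ℝ => κ / 2) atTop atTop :=
      tendsto_id.atTop_div_const two_pos
    exact h4.atTop_mul_pos h3 h2
  obtain ⟨b, hb1, hba⟩ := ((htop.eventually_ge_atTop 1).and (eventually_gt_atTop a)).exists
  have h1mem : (1:ℝ) ∈ Set.Icc (G a) (G b) := ⟨by rw [hGa]; norm_num, hb1⟩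
  obtain ⟨κ₀, hκ₀mem, hGκ₀⟩ :=
    intermediate_value_Icc hba.le (hGcont.mono Set.Icc_subset_Ici_self) h1mem
  have hκ₀a : a < κ₀ := by
    rcases eq_or_lt_of_le hκ₀mem.1 with hEq | hlt
    · exfalso; rw [← hEq, hGa] at hGκ₀; norm_num at hGκ₀
    · exact hlt
  have hGrw : ∀ κ : ℝ, a < κ → κ / 2 * LambdaStar p (τ / κ) = G κ := by
    intro κ hκ
    rw [hLh (τ / κ) (hx0 κ hκ) (lt_trans (hxlt κ hκ) hp1)]
  refine ⟨κ₀, ⟨hκ₀a, ?_, ?_, ?_⟩, ?_⟩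
  · intro κ hκ hκκ₀
    rw [hGrw κ hκ, ← hGκ₀]
    exact hmono (Set.mem_Ici.mpr hκ.le) (Set.mem_Ici.mpr hκ₀a.le) hκκ₀
  · rw [hGrw κ₀ hκ₀a]; exact hGκ₀
  · intro κ hκ
    have haκ : a < κ := lt_trans hκ₀a hκ
    rw [hGrw κ haκ, ← hGκ₀]
    exact hmono (Set.mem_Ici.mpr hκ₀a.le) (Set.mem_Ici.mpr haκ.le) hκ
  · rintro κ' ⟨h1, h2, h3, h4⟩
    have hGκ' : G κ' = 1 := by rw [← hGrw κ' h1]; exact h3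
    exact hmono.injOn (Set.mem_Ici.mpr h1.le) (Set.mem_Ici.mpr hκ₀a.le)
      (hGκ'.trans hGκ₀.symm)
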